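/- Let H be a real Hilbert space, let c > 0, let ζ_c be Huber's loss function (ζ_c(t) = t²/2 for 0 ≤ t ≤ c, ζ_c(t) = ct − c²/2 for t > c), and let φ_c(t) = 1 for 0 ≤ t ≤ c and φ_c(t) = c/t for t > c. Let x_1, ..., x_n ∈ H and suppose f ∈ H minimizes the robust empirical risk F(g) = ∑_{i=1}^n ζ_c(‖x_i − g‖) over H. Then f is the weighted mean of the data points with weights determined by φ_c: f = ∑_{i=1}^n w_i x_i, where w_i = φ_c(‖x_i − f‖) / ∑_{b=1}^n φ_c(‖x_b − f‖); in particular f lies in the span (indeed the convex hull) of x_1, ..., x_n. -/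

import Mathlib

open scoped BigOperators

/-- Representer form of the robust kernel mean for Huber's loss: a minimizer `f` of the
robust empirical risk `g ↦ ∑ i, ζ_c(‖x i − g‖)` is the weighted mean of the data points
with weights `w i = φ_c(‖x i − f‖) / ∑ b, φ_c(‖x b − f‖)`; in particular `f` lies in the
convex hull of the data points. -/
theorem huber_robust_mean_representer
    {H : Type*} [NormedAddCommGroup H] [InnerProductSpace ℝ H] [CompleteSpace H]
    (c : ℝ) (hc : 0 < c) (ζ φc : ℝ → ℝ)
    (hζ : ∀ t, 0 ≤ t → ζ t = if t ≤ c then t ^ 2 / 2 else c * t - c ^ 2 / 2)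
    (hφc : ∀ t, 0 ≤ t → φc t = if t ≤ c then 1 else c / t)
    (n : ℕ) (hn : 0 < n) (x : Fin n → H) (f : H)
    (hmin : ∀ g : H, ∑ i, ζ ‖x i - f‖ ≤ ∑ i, ζ ‖x i - g‖)
    (w : Fin n → ℝ)
    (hw : ∀ i, w i = φc ‖x i - f‖ / ∑ b, φc ‖x b - f‖) :
    f = ∑ i, w i • x i ∧ f ∈ convexHull ℝ (Set.range x) := by
  haveI : Nonempty (Fin n) := ⟨⟨0, hn⟩⟩
  -- positivity of φc on nonneg reals
  have hφpos : ∀ t : ℝ, 0 ≤ t → 0 < φc t := by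
    intro t ht
    rw [hφc t ht]
    split_ifs with h
    · norm_num
    · push_neg at h
      exact div_pos hc (hc.trans h)
  -- key majorization inequality
  have key : ∀ s t : ℝ, 0 ≤ s → 0 ≤ t →
      ζ s ≤ ζ t + φc t * (s ^ 2 - t ^ 2) / 2 := by
    intro s t hs ht
    rw [hζ s hs, hζ t ht, hφc t ht]
    split_ifs with h1 h2 h2
    · nlinarith
    · push_neg at h2
      have ht0 : 0 < t := hc.trans h2
      rw [div_mul_eq_mul_div, div_div, ← sub_nonneg]
      have hid : c * t - c ^ 2 / 2 + c * (s ^ 2 - t ^ 2) / (t * 2) - s ^ 2 / 2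
          = (t - c) * (c * t - s ^ 2) / (t * 2) := by
        field_simp
        ring
      rw [hid]
      have h4 : s ^ 2 ≤ c * t := by nlinarith
      exact div_nonneg (mul_nonneg (by linarith) (by linarith)) (by positivity)
    · push_neg at h1
      nlinarith [sq_nonneg (s - c)]
    · push_neg at h1 h2
      have ht0 : 0 < t := hc.trans h2
      rw [div_mul_eq_mul_div, div_div, ← sub_nonneg]
      have hid : c * t - c ^ 2 / 2 + c * (s ^ 2 - t ^ 2) / (t * 2)
          - (c * s - c ^ 2 / 2) = c * (s - t) ^ 2 / (t * 2) := by
        field_simp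
        ring
      rw [hid]
      positivity
  set φi : Fin n → ℝ := fun i => φc ‖x i - f‖ with hφi
  have hφipos : ∀ i, 0 < φi i := fun i => hφpos _ (norm_nonneg _)
  set S : ℝ := ∑ i, φi i with hS
  have hSpos : 0 < S := Finset.sum_pos (fun i _ => hφipos i) Finset.univ_nonempty
  set g0 : H := S⁻¹ • ∑ i, φi i • x i with hg0
  -- the weighted residuals at g0 sum to zero
  have hsum0 : ∑ i, φi i • (x i - g0) = 0 := by
    have : ∑ i, φi i • (x i - g0) = (∑ i, φi i • x i) - S • g0 := by
      simp [smul_sub, Finset.sum_sub_distrib, ← Finset.sum_smul, hS]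
    rw [this, hg0, smul_smul, mul_inv_cancel₀ hSpos.ne', one_smul, sub_self]
  -- quadratic expansion identity
  have hquad : ∀ g : H, ∑ i, φi i * ‖x i - g‖ ^ 2
      = (∑ i, φi i * ‖x i - g0‖ ^ 2) + S * ‖g0 - g‖ ^ 2 := by
    intro g
    have hterm : ∀ i, φi i * ‖x i - g‖ ^ 2
        = φi i * ‖x i - g0‖ ^ 2 + 2 * (φi i * inner ℝ (x i - g0) (g0 - g))
          + φi i * ‖g0 - g‖ ^ 2 := by
      intro i
      have hd : x i - g = (x i - g0) + (g0 - g) := by abel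
      rw [hd, norm_add_sq_real]
      ring
    calc ∑ i, φi i * ‖x i - g‖ ^ 2
        = ∑ i, (φi i * ‖x i - g0‖ ^ 2 + 2 * (φi i * inner ℝ (x i - g0) (g0 - g))
            + φi i * ‖g0 - g‖ ^ 2) := by
          exact Finset.sum_congr rfl fun i _ => hterm i
      _ = (∑ i, φi i * ‖x i - g0‖ ^ 2)
            + 2 * (∑ i, φi i * inner ℝ (x i - g0) (g0 - g)) + S * ‖g0 - g‖ ^ 2 := by
          rw [Finset.sum_add_distrib, Finset.sum_add_distrib, ← Finset.mul_sum,
            hS, Finset.sum_mul]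
      _ = (∑ i, φi i * ‖x i - g0‖ ^ 2) + S * ‖g0 - g‖ ^ 2 := by
          have : ∑ i, φi i * (inner ℝ (x i - g0) (g0 - g) : ℝ)
              = inner ℝ (∑ i, φi i • (x i - g0)) (g0 - g) := by
            rw [sum_inner]
            exact Finset.sum_congr rfl fun i _ => (real_inner_smul_left _ _ _).symm
          rw [this, hsum0, inner_zero_left]
          ring
  -- majorization: F(g0) ≤ F(f) - (S/2)‖g0-f‖²
  have hmaj : ∑ i, ζ ‖x i - g0‖
      ≤ (∑ i, ζ ‖x i - f‖) - S * ‖g0 - f‖ ^ 2 / 2 := by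
    have h1 : ∑ i, ζ ‖x i - g0‖
        ≤ ∑ i, (ζ ‖x i - f‖ + φi i * (‖x i - g0‖ ^ 2 - ‖x i - f‖ ^ 2) / 2) :=
      Finset.sum_le_sum fun i _ => key _ _ (norm_nonneg _) (norm_nonneg _)
    have h2 : ∑ i, (ζ ‖x i - f‖ + φi i * (‖x i - g0‖ ^ 2 - ‖x i - f‖ ^ 2) / 2)
        = (∑ i, ζ ‖x i - f‖)
          + ((∑ i, φi i * ‖x i - g0‖ ^ 2) - ∑ i, φi i * ‖x i - f‖ ^ 2) / 2 := by
      rw [Finset.sum_add_distrib]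
      congr 1
      rw [← Finset.sum_div, ← Finset.sum_sub_distrib]
      congr 1
      exact Finset.sum_congr rfl fun i _ => by ring
    have h3 := hquad f
    rw [h2] at h1
    linarith
  -- conclude f = g0
  have hfg : f = g0 := by
    have h1 := hmin g0
    have h2 : S * ‖g0 - f‖ ^ 2 ≤ 0 := by linarith
    have h3 : ‖g0 - f‖ ^ 2 ≤ 0 := by
      nlinarith [sq_nonneg ‖g0 - f‖]
    have : ‖g0 - f‖ = 0 := by
      nlinarith [norm_nonneg (g0 - f)]
    have := norm_eq_zero.mp this
    rw [sub_eq_zero] at this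
    exact this.symm
  -- weights
  have hwS : ∀ i, w i = φi i / S := fun i => hw i
  have hwsum : ∑ i, w i = 1 := by
    rw [Finset.sum_congr rfl fun i _ => hwS i, ← Finset.sum_div, ← hS,
      div_self hSpos.ne']
  have hrepr : f = ∑ i, w i • x i := by
    rw [hfg, hg0, Finset.smul_sum]
    refine Finset.sum_congr rfl fun i _ => ?_
    rw [hwS i, div_eq_inv_mul, mul_smul]
  refine ⟨hrepr, ?_⟩
  have hw0 : ∀ i ∈ Finset.univ, (0:ℝ) ≤ w i := fun i _ => by
    rw [hwS i]; exact le_of_lt (div_pos (hφipos i) hSpos)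
  have hmem := Finset.centerMass_mem_convexHull (Finset.univ)
    hw0 (by rw [hwsum]; norm_num) (fun i _ => Set.mem_range_self (f := x) i)
  rwa [Finset.centerMass_eq_of_sum_1 _ _ hwsum, ← hrepr] at hmem
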